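/- Let h : ℝ^d → ℝ^d be continuous, let U ⊆ ℝ^d be open, and let V : U → ℝ be continuously differentiable. Let 0 < r' < r be such that V^r := {x ∈ U : V(x) ≤ r} is compact, and suppose there is a constant c > 0 with ∇V(x)·h(x) ≤ −c for all x ∈ V^r with V(x) > r'. Let s ∈ ℝ and let x : [s,∞) → U be differentiable with x'(t) = h(x(t)) and x(t) ∈ V^r for all t ≥ s. Set 𝒯 = (r − r')/c. Then V(x(t)) ≤ r' for all t ≥ s + 𝒯; in particular, x(t) ∈ V^{r'} := {x ∈ U : V(x) ≤ r'} for all t ≥ s + 𝒯. -/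

import Mathlib

/-- Let h be continuous, U open, V : U → ℝ C¹, 0 < r' < r with V^r compact, and suppose
∇V(x)·h(x) ≤ −c (c > 0) for all x ∈ V^r with V(x) > r'. If γ solves γ̇ = h(γ) on [s,∞)
and stays in V^r, then with 𝒯 = (r − r')/c, V(γ(t)) ≤ r' for all t ≥ s + 𝒯; in
particular γ(t) ∈ V^{r'} for all t ≥ s + 𝒯. -/
theorem stmt17 {d : ℕ}
    (h : EuclideanSpace ℝ (Fin d) → EuclideanSpace ℝ (Fin d))
    (hh : Continuous h)
    (U : Set (EuclideanSpace ℝ (Fin d))) (hU : IsOpen U)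
    (V : EuclideanSpace ℝ (Fin d) → ℝ) (hV : ContDiffOn ℝ 1 V U)
    (r' r : ℝ) (hr'pos : 0 < r') (hr'r : r' < r)
    (hcomp : IsCompact {x ∈ U | V x ≤ r})
    (c : ℝ) (hc : 0 < c)
    (hdec : ∀ x ∈ U, V x ≤ r → r' < V x → (inner ℝ (gradient V x) (h x) : ℝ) ≤ -c)
    (s : ℝ) (γ : ℝ → EuclideanSpace ℝ (Fin d))
    (hγmem : ∀ t, s ≤ t → γ t ∈ {x ∈ U | V x ≤ r})
    (hγd : ∀ t, s ≤ t → HasDerivAt γ (h (γ t)) t) :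
    ∀ t, s + (r - r') / c ≤ t → V (γ t) ≤ r' ∧ γ t ∈ {x ∈ U | V x ≤ r'} := by
  set φ : ℝ → ℝ := fun t => V (γ t) with hφdef
  -- derivative of φ
  have hφd : ∀ t, s ≤ t → HasDerivAt φ (inner ℝ (gradient V (γ t)) (h (γ t)) : ℝ) t := by
    intro t ht
    have hxU : γ t ∈ U := (hγmem t ht).1
    have hdiff : DifferentiableAt ℝ V (γ t) :=
      (hV.differentiableOn (by norm_num)).differentiableAt (hU.mem_nhds hxU)
    have hg := hdiff.hasGradientAt.hasFDerivAt
    have := hg.comp_hasDerivAt t (hγd t ht)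
    simp at this ⊢; exact this
  have hφcont : ∀ t, s ≤ t → ContinuousAt φ t := fun t ht => (hφd t ht).continuousAt
  intro t ht
  have hT : 0 < (r - r') / c := div_pos (by linarith) hc
  have hst : s < t := by linarith
  -- main claim
  have key : φ t ≤ r' := by
    by_contra hgt
    push_neg at hgt
    by_cases hA : ∃ u ∈ Set.Icc s t, φ u ≤ r'
    · -- take the last time ≤ r'
      obtain ⟨u₀, hu₀, hu₀le⟩ := hA
      set A : Set ℝ := {u ∈ Set.Icc s t | φ u ≤ r'} with hAdef
      have hAne : A.Nonempty := ⟨u₀, hu₀, hu₀le⟩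
      have hAbdd : BddAbove A := ⟨t, fun u hu => hu.1.2⟩
      have hAclosed : IsClosed A := by
        have hcontIcc : ContinuousOn φ (Set.Icc s t) := fun u hu =>
          (hφcont u hu.1).continuousWithinAt
        have : A = Set.Icc s t ∩ φ ⁻¹' Set.Iic r' := by
          ext u
          simp only [hAdef, Set.mem_setOf_eq, Set.mem_inter_iff, Set.mem_preimage, Set.mem_Iic]
        rw [this]
        exact (hcontIcc.preimage_isClosed_of_isClosed isClosed_Icc isClosed_Iic)
      have ht₂A : sSup A ∈ A := hAclosed.csSup_mem hAne hAbdd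
      set t₂ := sSup A with ht₂def
      have ht₂s : s ≤ t₂ := ht₂A.1.1
      have ht₂t : t₂ ≤ t := ht₂A.1.2
      have ht₂lt : t₂ < t := lt_of_le_of_ne ht₂t (by
        intro heq
        exact absurd ht₂A.2 (by rw [heq]; linarith))
      have hgt' : ∀ u ∈ Set.Ioc t₂ t, r' < φ u := by
        intro u hu
        by_contra hle
        push_neg at hle
        have : u ∈ A := ⟨⟨le_trans ht₂s hu.1.le, hu.2⟩, hle⟩
        exact absurd (le_csSup hAbdd this) (not_le.mpr hu.1)
      -- φ antitone on [t₂, t]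
      have hanti : AntitoneOn φ (Set.Icc t₂ t) := by
        apply antitoneOn_of_deriv_nonpos (convex_Icc _ _)
        · exact fun u hu => (hφcont u (le_trans ht₂s hu.1)).continuousWithinAt
        · rw [interior_Icc]
          intro u hu
          exact ((hφd u (le_trans ht₂s hu.1.le)).differentiableAt).differentiableWithinAt
        · rw [interior_Icc]
          intro u hu
          have hus : s ≤ u := le_trans ht₂s hu.1.le
          rw [(hφd u hus).deriv]
          have hmem := hγmem u hus
          have := hdec (γ u) hmem.1 hmem.2 (hgt' u ⟨hu.1, hu.2.le⟩)
          linarith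
      have := hanti (Set.left_mem_Icc.2 ht₂t) (Set.right_mem_Icc.2 ht₂t) ht₂t
      have := ht₂A.2
      linarith
    · -- φ > r' on all of [s,t]: quantitative decrease
      push_neg at hA
      set ψ : ℝ → ℝ := fun u => φ u + c * u with hψdef
      have hanti : AntitoneOn ψ (Set.Icc s t) := by
        apply antitoneOn_of_deriv_nonpos (convex_Icc _ _)
        · exact fun u hu => ((hφcont u hu.1).add (by fun_prop)).continuousWithinAt
        · rw [interior_Icc]
          intro u hu
          exact (((hφd u hu.1.le).differentiableAt).add (by fun_prop)).differentiableWithinAt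
        · rw [interior_Icc]
          intro u hu
          have hψd : HasDerivAt ψ ((inner ℝ (gradient V (γ u)) (h (γ u)) : ℝ) + c) u := by
            have := (hφd u hu.1.le).add ((hasDerivAt_id u).const_mul c)
            simp [hψdef, mul_comm] at this ⊢; exact this
          rw [hψd.deriv]
          have hmem := hγmem u hu.1.le
          have := hdec (γ u) hmem.1 hmem.2 (hA u ⟨hu.1.le, hu.2.le⟩)
          linarith
      have h1 := hanti (Set.left_mem_Icc.2 hst.le) (Set.right_mem_Icc.2 hst.le) hst.le
      have hφs : φ s ≤ r := (hγmem s le_rfl).2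
      have hct : c * ((r - r') / c) ≤ c * (t - s) := by
        apply mul_le_mul_of_nonneg_left (by linarith) hc.le
      rw [mul_div_cancel₀ _ hc.ne'] at hct
      simp only [hψdef] at h1
      linarith
  have hUt : γ t ∈ U := (hγmem t hst.le).1
  exact ⟨key, hUt, key⟩
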